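/- Let G be a finite group with exactly two irreducible characters χ, ψ of degree greater than 1. If the restrictions of χ and ψ to G' are distinct (as class functions on G'), then χ and ψ both vanish on G \ G'. -/

import Mathlib

open scoped Classical Pointwise

/-- `χ : G → ℂ` is an irreducible (complex) character of `G`. -/
def IsIrrChar (G : Type) [Group G] (χ : G → ℂ) : Prop :=
  ∃ V : FDRep ℂ G, CategoryTheory.Simple V ∧ χ = V.character

/-- A nonlinear irreducible character: irreducible of degree `> 1`. -/
def IsNonlinChar (G : Type) [Group G] (χ : G → ℂ) : Prop :=
  IsIrrChar G χ ∧ 1 < (χ 1).re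

/-- The conjugacy class of `g` in `G`. -/
def conjClass {G : Type*} [Group G] (g : G) : Set G := {x | IsConj g x}

open CategoryTheory

section TwistAux

variable {G : Type} [Group G]

/-- Twist a representation by a homomorphism to `ℂˣ`. -/
def twistRep (lam : G →* ℂˣ) {W : Type} [AddCommGroup W] [Module ℂ W]
    (ρ : Representation ℂ G W) : Representation ℂ G W where
  toFun g := (lam g : ℂ) • ρ g
  map_one' := by simp
  map_mul' g h := by
    show (lam (g*h) : ℂ) • ρ (g*h) = ((lam g : ℂ) • ρ g) * ((lam h : ℂ) • ρ h)
    rw [map_mul, map_mul, Units.val_mul, smul_mul_assoc, mul_smul_comm, smul_smul]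

/-- Twist an `FDRep` by a homomorphism to `ℂˣ`. -/
noncomputable def twistObj (lam : G →* ℂˣ) (V : FDRep ℂ G) : FDRep ℂ G :=
  FDRep.of (twistRep lam V.ρ)

lemma twistObj_char (lam : G →* ℂˣ) (V : FDRep ℂ G) (g : G) :
    (twistObj lam V).character g = (lam g : ℂ) * V.character g := by
  show LinearMap.trace ℂ _ ((twistRep lam V.ρ) g) = _
  show LinearMap.trace ℂ _ ((lam g : ℂ) • V.ρ g) = _
  rw [map_smul]
  rfl

/-- Twist of a morphism of representations. -/
noncomputable def twistMap (lam : G →* ℂˣ) {X Y : FDRep ℂ G} (f : X ⟶ Y) :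
    twistObj lam X ⟶ twistObj lam Y where
  hom := f.hom
  comm g := by
    have h' : f.hom.hom.hom.comp (X.ρ g) = (Y.ρ g).comp f.hom.hom.hom :=
      congrArg (fun k => k.hom.hom) (f.comm g)
    ext x
    show f.hom.hom.hom ((lam g : ℂ) • (X.ρ g x : X.V)) = (lam g : ℂ) • Y.ρ g (f.hom.hom.hom x)
    rw [map_smul]
    exact congrArg _ (LinearMap.congr_fun h' x)

/-- The twisting functor. -/
noncomputable def twistFunctor (lam : G →* ℂˣ) : FDRep ℂ G ⥤ FDRep ℂ G where
  obj := twistObj lam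
  map := twistMap lam

lemma untwist_comm (lam : G →* ℂˣ) (V : FDRep ℂ G) (g : G) :
    Action.ρ (twistObj lam⁻¹ (twistObj lam V)) g ≫ (Iso.refl (twistObj lam⁻¹ (twistObj lam V)).V).hom
      = (Iso.refl (twistObj lam⁻¹ (twistObj lam V)).V).hom ≫ Action.ρ V g := by
  ext x
  show ((lam⁻¹ g : ℂ) • ((lam g : ℂ) • V.ρ g x) : V.V) = V.ρ g x
  rw [smul_smul, MonoidHom.inv_apply, ← Units.val_mul, inv_mul_cancel, Units.val_one, one_smul]

lemma untwist_comm' (lam : G →* ℂˣ) (V : FDRep ℂ G) (g : G) :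
    Action.ρ (twistObj lam (twistObj lam⁻¹ V)) g ≫ (Iso.refl (twistObj lam (twistObj lam⁻¹ V)).V).hom
      = (Iso.refl (twistObj lam (twistObj lam⁻¹ V)).V).hom ≫ Action.ρ V g := by
  ext x
  show ((lam g : ℂ) • ((lam⁻¹ g : ℂ) • V.ρ g x) : V.V) = V.ρ g x
  rw [smul_smul, MonoidHom.inv_apply, ← Units.val_mul, mul_inv_cancel, Units.val_one, one_smul]

/-- Untwisting is the identity. -/
noncomputable def untwistIso (lam : G →* ℂˣ) (V : FDRep ℂ G) :
    twistObj lam⁻¹ (twistObj lam V) ≅ V :=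
  Action.mkIso (Iso.refl _) (untwist_comm lam V)

/-- Untwisting is the identity, other direction. -/
noncomputable def untwistIso' (lam : G →* ℂˣ) (V : FDRep ℂ G) :
    twistObj lam (twistObj lam⁻¹ V) ≅ V :=
  Action.mkIso (Iso.refl _) (untwist_comm' lam V)

/-- Twisting is an equivalence of categories. -/
noncomputable def twistEquiv (lam : G →* ℂˣ) : FDRep ℂ G ≌ FDRep ℂ G where
  functor := twistFunctor lam
  inverse := twistFunctor lam⁻¹
  unitIso := NatIso.ofComponents (fun V => (untwistIso lam V).symm) (by
    intro X Y f
    ext1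
    show f.hom ≫ 𝟙 _ = 𝟙 _ ≫ f.hom
    simp)
  counitIso := NatIso.ofComponents (fun V => untwistIso' lam V) (by
    intro X Y f
    ext1
    show f.hom ≫ 𝟙 _ = 𝟙 _ ≫ f.hom
    simp)

instance twistFunctor_pres_zero (lam : G →* ℂˣ) : (twistFunctor lam).PreservesZeroMorphisms :=
  ⟨fun X Y => by ext1; rfl⟩

/-- An equivalence between preadditive categories sends simple objects to simple objects. -/
theorem simple_of_equiv {C D : Type*} [Category C] [Category D]
    [Preadditive C] [Preadditive D]
    (e : C ≌ D) [e.inverse.PreservesZeroMorphisms] (X : C) [Simple X] :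
    Simple (e.functor.obj X) := by
  constructor
  intro Y f m
  letI i : e.inverse.obj (e.functor.obj X) ≅ X := (e.unitIso.app X).symm
  haveI m2 : Mono (e.inverse.map f) := inferInstance
  haveI m3 : Mono (e.inverse.map f ≫ i.hom) := mono_comp _ _
  have key := Simple.mono_isIso_iff_nonzero (e.inverse.map f ≫ i.hom)
  constructor
  · intro hf h0
    haveI : IsIso (e.inverse.map f ≫ i.hom) := inferInstance
    exact key.mp inferInstance (by rw [h0, e.inverse.map_zero, Limits.zero_comp])
  · intro h0
    have hnz : e.inverse.map f ≫ i.hom ≠ 0 := by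
      rw [Ne, Preadditive.IsIso.comp_right_eq_zero, e.inverse.map_eq_zero_iff]
      exact h0
    haveI := key.mpr hnz
    haveI : IsIso (e.inverse.map f) := IsIso.of_isIso_comp_right _ i.hom
    exact isIso_of_reflects_iso f e.inverse

/-- The twist of a simple representation is simple. -/
theorem twist_simple (lam : G →* ℂˣ) (V : FDRep ℂ G) [Simple V] :
    Simple (twistObj lam V) := by
  haveI : ((twistEquiv lam).inverse).PreservesZeroMorphisms :=
    (inferInstance : (twistFunctor lam⁻¹).PreservesZeroMorphisms)
  exact simple_of_equiv (twistEquiv lam) V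

/-- Separation of a non-commutator element by a linear character. -/
lemma exists_lam {G : Type} [Group G] [Fintype G] {g : G} (hg : g ∉ commutator G) :
    ∃ lam : G →* ℂˣ, (∀ h ∈ commutator G, lam h = 1) ∧ lam g ≠ 1 := by
  have hfin : Finite (Abelianization G) := Quotient.finite _
  have hne : NeZero ((Monoid.exponent (Abelianization G) : ℂ)) := by
    refine ⟨?_⟩
    rw [Nat.cast_ne_zero]
    exact Monoid.exponent_ne_zero_of_finite
  have ha : Abelianization.of g ≠ 1 := fun h => hg ((QuotientGroup.eq_one_iff g).mp h)
  obtain ⟨φ, hφ⟩ := CommGroup.exists_apply_ne_one_of_hasEnoughRootsOfUnity (Abelianization G) ℂ ha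
  refine ⟨φ.comp Abelianization.of, fun h hh => ?_, hφ⟩
  have : Abelianization.of h = 1 := (QuotientGroup.eq_one_iff h).mpr hh
  simp [this]

end TwistAux

theorem two_nonlinear_distinct_restriction_vanish (G : Type) [Group G] [Fintype G]
    (χ ψ : G → ℂ) (hne : χ ≠ ψ)
    (hχ : IsNonlinChar G χ) (hψ : IsNonlinChar G ψ)
    (honly : ∀ φ : G → ℂ, IsNonlinChar G φ → φ = χ ∨ φ = ψ)
    (hres : ∃ g : G, g ∈ commutator G ∧ χ g ≠ ψ g) :
    ∀ g : G, g ∉ commutator G → χ g = 0 ∧ ψ g = 0 := by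
  intro g hg
  obtain ⟨lam, hltriv, hlg⟩ := exists_lam hg
  have hlgC : (lam g : ℂ) ≠ 1 := by
    intro h
    exact hlg (Units.ext (by rw [h, Units.val_one]))
  obtain ⟨h0, hh0, hdiff⟩ := hres
  have hlam_h0 : (lam h0 : ℂ) = 1 := by rw [hltriv h0 hh0, Units.val_one]
  have step : ∀ θ η : G → ℂ, IsNonlinChar G θ → θ h0 ≠ η h0 →
      (∀ φ : G → ℂ, IsNonlinChar G φ → φ = θ ∨ φ = η) → θ g = 0 := by
    intro θ η hθ hd honly'
    obtain ⟨V, hV, hchar⟩ := hθ.1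
    haveI := hV
    haveI hs : Simple (twistObj lam V) := twist_simple lam V
    have hch : ∀ x, (twistObj lam V).character x = (lam x : ℂ) * θ x := fun x => by
      rw [twistObj_char, ← hchar]
    have hnl : IsNonlinChar G ((twistObj lam V).character) := by
      refine ⟨⟨twistObj lam V, hs, rfl⟩, ?_⟩
      rw [hch 1, map_one, Units.val_one, one_mul]
      exact hθ.2
    rcases honly' _ hnl with he | he
    · have hgθ : (lam g : ℂ) * θ g = θ g := by
        have := congrFun he g
        rwa [hch g] at this
      have h2 : ((lam g : ℂ) - 1) * θ g = 0 := by
        rw [sub_mul, one_mul, hgθ, sub_self]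
      rcases mul_eq_zero.mp h2 with h | h
      · exact absurd (sub_eq_zero.mp h) hlgC
      · exact h
    · exfalso
      have := congrFun he h0
      rw [hch h0, hlam_h0, one_mul] at this
      exact hd this
  exact ⟨step χ ψ hχ hdiff honly,
    step ψ χ hψ (Ne.symm hdiff) (fun φ h => (honly φ h).symm)⟩
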